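/- Let p be an odd prime and χ the quadratic character of F_p. Then Σ χ(ab+1)χ(ac+1), summed over all ordered triples (a,b,c) of distinct nonzero elements of F_p, equals -p^2 + 6p - 13 if p ≡ 1 (mod 4), and -p^2 + 6p - 9 if p ≡ 3 (mod 4). -/

import Mathlib

open Finset

section S3aux
variable {p : ℕ} [Fact p.Prime]

private lemma S3_char_ne (hodd : p % 2 = 1) : ringChar (ZMod p) ≠ 2 := by
  rw [ZMod.ringChar_zmod_n]; omega

private lemma S3_sum_all (hodd : p % 2 = 1) {a : ZMod p} (ha : a ≠ 0) :
    ∑ b : ZMod p, quadraticChar (ZMod p) (a * b + 1) = 0 := by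
  have hbij : Function.Bijective (fun b : ZMod p => a * b + 1) := by
    constructor
    · intro x y h
      simp only at h
      exact mul_left_cancel₀ ha (add_right_cancel h)
    · intro x
      exact ⟨a⁻¹ * (x - 1), by field_simp; ring⟩
  calc ∑ b : ZMod p, quadraticChar (ZMod p) (a * b + 1)
      = ∑ x : ZMod p, quadraticChar (ZMod p) x :=
        Fintype.sum_bijective _ hbij _ _ (fun b => rfl)
    _ = 0 := quadraticChar_sum_zero (S3_char_ne hodd)

private lemma S3_sum_ne (hodd : p % 2 = 1) {a : ZMod p} (ha : a ≠ 0) :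
    ∑ b ∈ univ.filter (fun b : ZMod p => b ≠ 0), quadraticChar (ZMod p) (a * b + 1) = -1 := by
  have h0 : univ.filter (fun b : ZMod p => b ≠ 0) = univ.erase 0 := by
    ext x; simp [Finset.mem_erase]
  have h := Finset.add_sum_erase univ (fun b : ZMod p => quadraticChar (ZMod p) (a * b + 1))
    (mem_univ (0 : ZMod p))
  rw [S3_sum_all hodd ha] at h
  simp only [mul_zero, zero_add, map_one] at h
  rw [h0]
  linarith

end S3aux


section S3aux2
variable {p : ℕ} [Fact p.Prime]

private lemma S3_char_ne' (hodd : p % 2 = 1) : ringChar (ZMod p) ≠ 2 := by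
  rw [ZMod.ringChar_zmod_n]; omega

-- J = ∑ t, χ t * χ (t+1) = -1
private lemma S3_J (hodd : p % 2 = 1) :
    ∑ t : ZMod p, quadraticChar (ZMod p) t * quadraticChar (ZMod p) (t + 1) = -1 := by
  set χ := quadraticChar (ZMod p) with hχ
  have h := Finset.add_sum_erase univ (fun t : ZMod p => χ t * χ (t + 1)) (mem_univ (0 : ZMod p))
  rw [← h]
  have h0 : χ (0 : ZMod p) * χ (0 + 1) = 0 := by
    rw [hχ, quadraticChar_zero]; ring
  rw [h0, zero_add]
  have hstep : ∑ t ∈ univ.erase (0 : ZMod p), χ t * χ (t + 1)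
      = ∑ u ∈ univ.erase (1 : ZMod p), χ u := by
    apply Finset.sum_nbij' (fun t => 1 + t⁻¹) (fun u => (u - 1)⁻¹)
    · intro t ht
      simp only [mem_erase, mem_univ, and_true] at ht ⊢
      intro hc
      have : t⁻¹ = 0 := by linear_combination hc
      exact ht (inv_eq_zero.mp this)
    · intro u hu
      simp only [mem_erase, mem_univ, and_true] at hu ⊢
      intro hc
      apply hu
      have : u - 1 = 0 := by rwa [inv_eq_zero] at hc
      linear_combination this
    · intro t ht
      simp only [mem_erase, mem_univ, and_true] at ht
      field_simp
      ring
    · intro u hu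
      simp only [mem_erase, mem_univ, and_true] at hu
      have h1 : u - 1 ≠ 0 := fun hc => hu (by linear_combination hc)
      field_simp
      ring
    · intro t ht
      simp only [mem_erase, mem_univ, and_true] at ht
      have key : t * (t + 1) = t ^ 2 * (1 + t⁻¹) := by
        field_simp
      rw [hχ, ← map_mul, key, map_mul, quadraticChar_sq_one' ht, one_mul]
  rw [hstep]
  have h2 := Finset.add_sum_erase univ (fun u : ZMod p => χ u) (mem_univ (1 : ZMod p))
  rw [hχ] at h2 ⊢
  rw [quadraticChar_sum_zero (S3_char_ne' hodd)] at h2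
  simp only [map_one] at h2
  linarith

private lemma S3_card_sq (hodd : p % 2 = 1) (t : ZMod p) :
    ((univ.filter (fun a : ZMod p => a * a = t)).card : ℤ)
      = quadraticChar (ZMod p) t + 1 := by
  rw [← quadraticChar_card_sqrts (S3_char_ne' hodd) t]
  congr 2
  rw [Set.toFinset_setOf]
  apply Finset.filter_congr
  intro x _
  simp [pow_two]

private lemma S3_sq_sum (hodd : p % 2 = 1) :
    ∑ a : ZMod p, quadraticChar (ZMod p) (a * a + 1) = -1 := by
  set χ := quadraticChar (ZMod p) with hχ
  have hfib := Finset.sum_fiberwise univ (fun a : ZMod p => a * a)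
    (fun a : ZMod p => χ (a * a + 1))
  rw [← hfib]
  have hstep : ∀ t : ZMod p,
      ∑ a ∈ univ.filter (fun a : ZMod p => a * a = t), χ (a * a + 1)
        = (χ t + 1) * χ (t + 1) := by
    intro t
    have : ∑ a ∈ univ.filter (fun a : ZMod p => a * a = t), χ (a * a + 1)
        = ∑ a ∈ univ.filter (fun a : ZMod p => a * a = t), χ (t + 1) := by
      apply Finset.sum_congr rfl
      intro x hx
      simp only [mem_filter, mem_univ, true_and] at hx
      rw [hx]
    rw [this, Finset.sum_const, nsmul_eq_mul, ← S3_card_sq hodd t]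
  rw [Finset.sum_congr rfl (fun t _ => hstep t)]
  have hexp : ∀ t : ZMod p, (χ t + 1) * χ (t + 1) = χ t * χ (t + 1) + χ (t + 1) := by
    intro t; ring
  rw [Finset.sum_congr rfl (fun t _ => hexp t), Finset.sum_add_distrib, S3_J hodd]
  have hshift : ∑ t : ZMod p, χ (t + 1) = 0 := by
    have hbij : Function.Bijective (fun t : ZMod p => t + 1) :=
      (Equiv.addRight (1 : ZMod p)).bijective
    calc ∑ t : ZMod p, χ (t + 1) = ∑ x : ZMod p, χ x :=
          Fintype.sum_bijective _ hbij _ _ (fun b => rfl)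
      _ = 0 := quadraticChar_sum_zero (S3_char_ne' hodd)
  rw [hshift]
  ring

private lemma S3_neg_one_count (hodd : p % 2 = 1) :
    ((univ.filter (fun a : ZMod p => a * a = -1)).card : ℤ)
      = if p % 4 = 1 then 2 else 0 := by
  rw [S3_card_sq hodd (-1), quadraticChar_neg_one (S3_char_ne' hodd)]
  have hc : Fintype.card (ZMod p) = p := ZMod.card p
  rw [hc, ZMod.χ₄_nat_eq_if_mod_four]
  have : ¬ (p % 2 = 0) := by omega
  rw [if_neg this]
  have h4 : p % 4 = 1 ∨ p % 4 = 3 := by omega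
  rcases h4 with h | h
  · rw [if_pos h, if_pos h]; norm_num
  · rw [if_neg (by omega), if_neg (by omega)]; norm_num

end S3aux2


theorem S3_sum (p : ℕ) [Fact p.Prime] (hodd : p % 2 = 1) :
    (∑ a : ZMod p, ∑ b : ZMod p, ∑ c : ZMod p,
      if a ≠ 0 ∧ b ≠ 0 ∧ c ≠ 0 ∧ a ≠ b ∧ a ≠ c ∧ b ≠ c then
        quadraticChar (ZMod p) (a * b + 1) * quadraticChar (ZMod p) (a * c + 1)
      else 0) =
      if p % 4 = 1 then -(p : ℤ) ^ 2 + 6 * p - 13 else -(p : ℤ) ^ 2 + 6 * p - 9 := by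
  have hp2 : 2 ≤ p := (Fact.out : p.Prime).two_le
  have hp3 : 3 ≤ p := by omega
  have hneg1 : (-1 : ZMod p) ≠ 0 := by
    have : Nontrivial (ZMod p) := by
      have : Fact (1 < p) := ⟨by omega⟩
      infer_instance
    exact neg_ne_zero.mpr one_ne_zero
  set A : Finset (ZMod p) := univ.filter (fun a => a ≠ 0) with hA
  have step1 : (∑ a ∈ A, ∑ b ∈ univ.filter (fun b : ZMod p => b ≠ 0 ∧ b ≠ a),
      ∑ c ∈ univ.filter (fun c : ZMod p => c ≠ 0 ∧ c ≠ a ∧ c ≠ b),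
        quadraticChar (ZMod p) (a * b + 1) * quadraticChar (ZMod p) (a * c + 1))
      = (∑ a : ZMod p, ∑ b : ZMod p, ∑ c : ZMod p,
      if a ≠ 0 ∧ b ≠ 0 ∧ c ≠ 0 ∧ a ≠ b ∧ a ≠ c ∧ b ≠ c then
        quadraticChar (ZMod p) (a * b + 1) * quadraticChar (ZMod p) (a * c + 1)
      else 0) := by
    rw [hA, Finset.sum_filter]
    apply Finset.sum_congr rfl; intro a _
    by_cases ha : a ≠ 0
    · rw [if_pos ha, Finset.sum_filter]
      apply Finset.sum_congr rfl; intro b _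
      by_cases hb : b ≠ 0 ∧ b ≠ a
      · rw [if_pos hb, Finset.sum_filter]
        apply Finset.sum_congr rfl; intro c _
        by_cases hc : c ≠ 0 ∧ c ≠ a ∧ c ≠ b
        · rw [if_pos hc,
            if_pos ⟨ha, hb.1, hc.1, Ne.symm hb.2, Ne.symm hc.2.1, Ne.symm hc.2.2⟩]
        · rw [if_neg hc,
            if_neg (fun h => hc ⟨h.2.2.1, Ne.symm h.2.2.2.2.1, Ne.symm h.2.2.2.2.2⟩)]
      · rw [if_neg hb]; symm
        apply Finset.sum_eq_zero; intro c _
        rw [if_neg (fun h => hb ⟨h.2.1, Ne.symm h.2.2.2.1⟩)]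
    · rw [if_neg ha]; symm
      apply Finset.sum_eq_zero; intro b _
      apply Finset.sum_eq_zero; intro c _
      rw [if_neg (fun h => ha h.1)]
  rw [← step1]
  have per_a : ∀ a ∈ A, (∑ b ∈ univ.filter (fun b : ZMod p => b ≠ 0 ∧ b ≠ a),
      ∑ c ∈ univ.filter (fun c : ZMod p => c ≠ 0 ∧ c ≠ a ∧ c ≠ b),
        quadraticChar (ZMod p) (a * b + 1) * quadraticChar (ZMod p) (a * c + 1))
      = (3 - (p : ℤ)) + 2 * quadraticChar (ZMod p) (a * a + 1)
        + 2 * (if a * a = (-1 : ZMod p) then (0 : ℤ) else 1) := by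
    intro a haA
    have ha : a ≠ 0 := by simpa [hA] using haA
    have hainv : a⁻¹ ≠ 0 := inv_ne_zero ha
    have hsetBa : univ.filter (fun b : ZMod p => b ≠ 0 ∧ b ≠ a)
        = (univ.filter (fun b : ZMod p => b ≠ 0)).erase a := by
      ext x; simp only [mem_filter, mem_univ, true_and, Finset.mem_erase]; tauto
    have hcardBa : (((univ.filter (fun b : ZMod p => b ≠ 0 ∧ b ≠ a)).card : ℤ)) = (p : ℤ) - 2 := by
      rw [hsetBa, Finset.card_erase_of_mem (by simp [ha])]
      have h1 : (univ.filter (fun b : ZMod p => b ≠ 0)).card = p - 1 := by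
        rw [show univ.filter (fun b : ZMod p => b ≠ 0) = univ.erase 0 from by
          ext x; simp [Finset.mem_erase]]
        rw [Finset.card_erase_of_mem (mem_univ 0), Finset.card_univ, ZMod.card]
      rw [h1]
      omega
    have hg : ∑ c ∈ univ.filter (fun c : ZMod p => c ≠ 0 ∧ c ≠ a),
        quadraticChar (ZMod p) (a * c + 1) = -1 - quadraticChar (ZMod p) (a * a + 1) := by
      have hset : univ.filter (fun c : ZMod p => c ≠ 0 ∧ c ≠ a)
          = (univ.filter (fun c : ZMod p => c ≠ 0)).erase a := by
        ext x; simp only [mem_filter, mem_univ, true_and, Finset.mem_erase]; tauto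
      rw [hset, Finset.sum_erase_eq_sub (by simp [ha]), S3_sum_ne hodd ha]
    have hg' : ∑ b ∈ univ.filter (fun b : ZMod p => b ≠ 0 ∧ b ≠ a),
        quadraticChar (ZMod p) (a * b + 1) = -1 - quadraticChar (ZMod p) (a * a + 1) := hg
    have hinner : ∀ b ∈ univ.filter (fun b : ZMod p => b ≠ 0 ∧ b ≠ a),
        ∑ c ∈ univ.filter (fun c : ZMod p => c ≠ 0 ∧ c ≠ a ∧ c ≠ b),
          quadraticChar (ZMod p) (a * c + 1)
        = (-1 - quadraticChar (ZMod p) (a * a + 1)) - quadraticChar (ZMod p) (a * b + 1) := by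
      intro b hb
      simp only [mem_filter, mem_univ, true_and] at hb
      have hset : univ.filter (fun c : ZMod p => c ≠ 0 ∧ c ≠ a ∧ c ≠ b)
          = (univ.filter (fun c : ZMod p => c ≠ 0 ∧ c ≠ a)).erase b := by
        ext x; simp only [mem_filter, mem_univ, true_and, Finset.mem_erase]; tauto
      rw [hset, Finset.sum_erase_eq_sub (by simp [hb.1, hb.2]), hg]
    have hQ : ∑ b ∈ univ.filter (fun b : ZMod p => b ≠ 0 ∧ b ≠ a),
        quadraticChar (ZMod p) (a * b + 1) * quadraticChar (ZMod p) (a * b + 1)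
        = ((p : ℤ) - 2) - (if a * a = (-1 : ZMod p) then (0 : ℤ) else 1) := by
      have hQ1 : ∀ b ∈ univ.filter (fun b : ZMod p => b ≠ 0 ∧ b ≠ a),
          quadraticChar (ZMod p) (a * b + 1) * quadraticChar (ZMod p) (a * b + 1)
          = 1 - (if b = -a⁻¹ then (1 : ℤ) else 0) := by
        intro b _
        by_cases h : b = -a⁻¹
        · rw [if_pos h]
          have h0 : a * b + 1 = 0 := by
            rw [h]; field_simp; ring
          rw [h0, quadraticChar_zero]; ring
        · rw [if_neg h]
          have hne : a * b + 1 ≠ 0 := by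
            intro hc
            apply h
            have hab : a * b = -1 := by linear_combination hc
            calc b = a⁻¹ * (a * b) := by field_simp
              _ = -a⁻¹ := by rw [hab]; ring
          have hsq := quadraticChar_sq_one hne
          rw [pow_two] at hsq
          rw [hsq]; ring
      rw [Finset.sum_congr rfl hQ1, Finset.sum_sub_distrib, Finset.sum_const,
        Finset.sum_ite_eq' _ (-a⁻¹) (fun _ => (1 : ℤ))]
      have hmem : (-a⁻¹ ∈ univ.filter (fun b : ZMod p => b ≠ 0 ∧ b ≠ a))
          ↔ ¬ (a * a = -1) := by
        simp only [mem_filter, mem_univ, true_and]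
        constructor
        · rintro ⟨_, h2⟩ hc
          apply h2
          have : a⁻¹ = -a := inv_eq_of_mul_eq_one_right (by rw [mul_neg, hc, neg_neg])
          rw [this, neg_neg]
        · intro hc
          refine ⟨neg_ne_zero.mpr hainv, fun he => hc ?_⟩
          have := congrArg (fun x => a * x) he
          rw [mul_neg, mul_inv_cancel₀ ha] at this
          linear_combination -this
      by_cases hcase : a * a = (-1 : ZMod p)
      · rw [if_neg (fun hm => (hmem.mp hm) hcase), if_pos hcase]
        rw [nsmul_eq_mul, hcardBa]; ring
      · rw [if_pos (hmem.mpr hcase), if_neg hcase]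
        rw [nsmul_eq_mul, hcardBa]; ring
    calc ∑ b ∈ univ.filter (fun b : ZMod p => b ≠ 0 ∧ b ≠ a),
          ∑ c ∈ univ.filter (fun c : ZMod p => c ≠ 0 ∧ c ≠ a ∧ c ≠ b),
            quadraticChar (ZMod p) (a * b + 1) * quadraticChar (ZMod p) (a * c + 1)
        = ∑ b ∈ univ.filter (fun b : ZMod p => b ≠ 0 ∧ b ≠ a),
            quadraticChar (ZMod p) (a * b + 1)
              * ((-1 - quadraticChar (ZMod p) (a * a + 1))
                - quadraticChar (ZMod p) (a * b + 1)) := by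
          apply Finset.sum_congr rfl; intro b hb
          rw [← Finset.mul_sum, hinner b hb]
      _ = (-1 - quadraticChar (ZMod p) (a * a + 1))
            * (∑ b ∈ univ.filter (fun b : ZMod p => b ≠ 0 ∧ b ≠ a),
                quadraticChar (ZMod p) (a * b + 1))
          - ∑ b ∈ univ.filter (fun b : ZMod p => b ≠ 0 ∧ b ≠ a),
              quadraticChar (ZMod p) (a * b + 1) * quadraticChar (ZMod p) (a * b + 1) := by
          rw [Finset.mul_sum, ← Finset.sum_sub_distrib]
          apply Finset.sum_congr rfl; intro b _; ring
      _ = (-1 - quadraticChar (ZMod p) (a * a + 1))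
            * (-1 - quadraticChar (ZMod p) (a * a + 1))
          - (((p : ℤ) - 2) - (if a * a = (-1 : ZMod p) then (0 : ℤ) else 1)) := by
          rw [hg', hQ]
      _ = (3 - (p : ℤ)) + 2 * quadraticChar (ZMod p) (a * a + 1)
          + 2 * (if a * a = (-1 : ZMod p) then (0 : ℤ) else 1) := by
          have hx2 : quadraticChar (ZMod p) (a * a + 1) * quadraticChar (ZMod p) (a * a + 1)
              = (if a * a = (-1 : ZMod p) then (0 : ℤ) else 1) := by
            by_cases h : a * a = (-1 : ZMod p)
            · rw [if_pos h]
              have h0 : a * a + 1 = 0 := by rw [h]; ring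
              rw [h0, quadraticChar_zero]; ring
            · rw [if_neg h]
              have hne : a * a + 1 ≠ 0 := fun hc => h (by linear_combination hc)
              have hsq := quadraticChar_sq_one hne
              rw [pow_two] at hsq
              exact hsq
          linear_combination hx2
  rw [Finset.sum_congr rfl per_a]
  have hAcard : (A.card : ℤ) = (p : ℤ) - 1 := by
    rw [hA, show univ.filter (fun b : ZMod p => b ≠ 0) = univ.erase 0 from by
      ext x; simp [Finset.mem_erase]]
    rw [Finset.card_erase_of_mem (mem_univ 0), Finset.card_univ, ZMod.card]
    omega
  have hAsum : ∑ a ∈ A, quadraticChar (ZMod p) (a * a + 1) = -2 := by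
    have hAe : A = univ.erase 0 := by
      rw [hA]; ext x; simp [Finset.mem_erase]
    rw [hAe, Finset.sum_erase_eq_sub (mem_univ 0), S3_sq_sum hodd,
      show (0 : ZMod p) * 0 + 1 = 1 by ring, map_one]
    norm_num
  have hAind : ∑ a ∈ A, (if a * a = (-1 : ZMod p) then (0 : ℤ) else 1)
      = ((p : ℤ) - 1) - (if p % 4 = 1 then 2 else 0) := by
    have hpt : ∀ a ∈ A, (if a * a = (-1 : ZMod p) then (0 : ℤ) else 1)
        = 1 - (if a * a = (-1 : ZMod p) then (1 : ℤ) else 0) := by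
      intro a _; by_cases h : a * a = (-1 : ZMod p) <;> simp [h]
    rw [Finset.sum_congr rfl hpt, Finset.sum_sub_distrib, Finset.sum_const, Finset.sum_boole]
    have hAf : A.filter (fun a : ZMod p => a * a = -1)
        = univ.filter (fun a : ZMod p => a * a = -1) := by
      rw [hA]
      ext x
      simp only [Finset.filter_filter, mem_filter, mem_univ, true_and]
      constructor
      · rintro ⟨_, h⟩; exact h
      · intro h
        refine ⟨fun hx => ?_, h⟩
        rw [hx, mul_zero] at h
        exact hneg1 h.symm
    rw [hAf, S3_neg_one_count hodd, nsmul_eq_mul, hAcard, mul_one]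
  rw [Finset.sum_add_distrib, Finset.sum_add_distrib, Finset.sum_const,
    ← Finset.mul_sum, ← Finset.mul_sum, hAsum, hAind, nsmul_eq_mul, hAcard]
  have h4 : p % 4 = 1 ∨ p % 4 = 3 := by omega
  rcases h4 with h | h
  · rw [if_pos h, if_pos h]; ring
  · rw [if_neg (by omega), if_neg (by omega)]; ring
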